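/- There exist constants ε₀ > 0 and C > 0 such that for every ε ∈ (0, ε₀], every r₀ > 0 and θ₀ ∈ ℝ for which the polar rectangle R with parameters ε, r₀, θ₀ is contained in (0,∞) × [0,π] or in (0,∞) × [−π,0], and for every r₁ > 0 and every t > 0, one has ∫_{r₀}^{r₀+ε} ∫_{{θ : |θ−θ₀| ≤ ε/r₀, |θ| ≤ π}} (t² − r₁² − r² + 2 r₁ r cos θ)₊^{−1/2} · r dθ dr ≤ C · min(t, t^{−1/2}). -/

import Mathlib

open MeasureTheory Real Set
open scoped ENNReal

/-- `(x)₊^{-1/2}`: equals `x^{-1/2}` for `x > 0` and `0` for `x ≤ 0`. -/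
noncomputable def negHalfPos (x : ℝ) : ℝ := if 0 < x then x ^ (-(1/2) : ℝ) else 0

/-- Lemma 3.2: integral bound over polar rectangles for the geometric kernel. -/
lemma negHalfPos_eq (x : ℝ) : negHalfPos x = (Real.sqrt x)⁻¹ := by
  unfold negHalfPos
  split_ifs with h
  · rw [Real.rpow_neg h.le, Real.sqrt_eq_rpow]
  · rw [Real.sqrt_eq_zero_of_nonpos (not_lt.1 h), inv_zero]

lemma negHalfPos_nonneg (x : ℝ) : 0 ≤ negHalfPos x := by
  rw [negHalfPos_eq]; positivity

lemma measurable_negHalfPos : Measurable negHalfPos := by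
  simp only [funext negHalfPos_eq]
  exact (Real.continuous_sqrt.measurable).inv

-- radial pointwise bounds
lemma radial1 (t ρ : ℝ) (ht : 0 < t) (hρ : 0 ≤ ρ) :
    negHalfPos (t^2 - ρ^2) ≤ (Real.sqrt t)⁻¹ * negHalfPos (t - ρ) := by
  rcases le_or_gt (t^2 - ρ^2) 0 with h | h
  · rw [negHalfPos_eq, Real.sqrt_eq_zero_of_nonpos h, inv_zero]
    exact mul_nonneg (by positivity) (negHalfPos_nonneg _)
  · have hρt : ρ < t := by nlinarith
    have h1 : t^2 - ρ^2 = (t - ρ) * (t + ρ) := by ring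
    rw [negHalfPos_eq, negHalfPos_eq, h1, Real.sqrt_mul (by linarith), mul_inv]
    rw [mul_comm ((Real.sqrt (t - ρ))⁻¹)]
    apply mul_le_mul_of_nonneg_right _ (by positivity)
    apply inv_anti₀ (Real.sqrt_pos.2 ht)
    exact Real.sqrt_le_sqrt (by linarith)

lemma radial2 (t ρ : ℝ) (ht : 0 < t) (hρ : 0 ≤ ρ) :
    ρ * negHalfPos (t^2 - ρ^2) ≤ Real.sqrt t * negHalfPos (t - ρ) := by
  rcases le_or_gt (t^2 - ρ^2) 0 with h | h
  · rw [negHalfPos_eq, Real.sqrt_eq_zero_of_nonpos h, inv_zero, mul_zero]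
    exact mul_nonneg (Real.sqrt_nonneg _) (negHalfPos_nonneg _)
  · have hρt : ρ < t := by nlinarith
    have h1 : t^2 - ρ^2 = (t - ρ) * (t + ρ) := by ring
    rw [negHalfPos_eq, negHalfPos_eq, h1, Real.sqrt_mul (by linarith), mul_inv]
    rw [show ρ * ((Real.sqrt (t-ρ))⁻¹ * (Real.sqrt (t+ρ))⁻¹)
      = (ρ * (Real.sqrt (t+ρ))⁻¹) * (Real.sqrt (t-ρ))⁻¹ by ring]
    rw [show Real.sqrt t * (Real.sqrt (t-ρ))⁻¹ = (Real.sqrt (t-ρ))⁻¹ * Real.sqrt t from mul_comm _ _] at *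
    rw [show (Real.sqrt (t-ρ))⁻¹ * Real.sqrt t = Real.sqrt t * (Real.sqrt (t-ρ))⁻¹ from mul_comm _ _]
    apply mul_le_mul_of_nonneg_right _ (by positivity)
    rw [mul_inv_le_iff₀ (Real.sqrt_pos.2 (by linarith))]
    calc ρ ≤ Real.sqrt (t * (t + ρ)) := by
          rw [Real.le_sqrt hρ (by nlinarith)]
          nlinarith
    _ = Real.sqrt t * Real.sqrt (t + ρ) := Real.sqrt_mul ht.le _

lemma le_of_sq_le_sq'' (a b : ℝ) (h : a^2 ≤ b^2) (hb : 0 ≤ b) : a ≤ b := by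
  nlinarith [le_abs_self a, abs_nonneg a, sq_abs a]

lemma rev_tri (a1 a2 b1 b2 : ℝ) :
    |Real.sqrt (a1^2 + a2^2) - Real.sqrt (b1^2 + b2^2)|
      ≤ Real.sqrt ((a1 - b1)^2 + (a2 - b2)^2) := by
  have key : ∀ x1 x2 y1 y2 : ℝ, Real.sqrt (x1^2+x2^2)
      ≤ Real.sqrt (y1^2+y2^2) + Real.sqrt ((x1-y1)^2+(x2-y2)^2) := by
    intro x1 x2 y1 y2
    have hb := Real.sqrt_nonneg (y1^2+y2^2)
    have hd := Real.sqrt_nonneg ((x1-y1)^2+(x2-y2)^2)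
    have hb2 : (Real.sqrt (y1^2+y2^2))^2 = y1^2+y2^2 := Real.sq_sqrt (by positivity)
    have hd2 : (Real.sqrt ((x1-y1)^2+(x2-y2)^2))^2 = (x1-y1)^2+(x2-y2)^2 :=
      Real.sq_sqrt (by positivity)
    have cs : y1*(x1-y1) + y2*(x2-y2) ≤ Real.sqrt (y1^2+y2^2) * Real.sqrt ((x1-y1)^2+(x2-y2)^2) := by
      apply le_of_sq_le_sq'' _ _ _ (by positivity)
      rw [mul_pow, hb2, hd2]
      nlinarith [sq_nonneg (y1*(x2-y2) - y2*(x1-y1))]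
    calc Real.sqrt (x1^2+x2^2)
        ≤ Real.sqrt ((Real.sqrt (y1^2+y2^2) + Real.sqrt ((x1-y1)^2+(x2-y2)^2))^2) := by
          apply Real.sqrt_le_sqrt; nlinarith
    _ = _ := Real.sqrt_sq (by positivity)
  rw [abs_sub_le_iff]
  constructor
  · have := key a1 a2 b1 b2; linarith
  · have h2 := key b1 b2 a1 a2
    have : Real.sqrt ((b1-a1)^2+(b2-a2)^2) = Real.sqrt ((a1-b1)^2+(a2-b2)^2) := by
      congr 1; ring
    linarith
lemma lem1d (t ℓ p q : ℝ) (hℓ : 0 ≤ ℓ) (hpq : q - p ≤ ℓ) :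
    ∫⁻ x in Icc p q, ENNReal.ofReal (negHalfPos (t - x)) ≤ ENNReal.ofReal (2 * Real.sqrt ℓ) := by
  set m := min q t with hm
  have hmq : m ≤ q := min_le_left _ _
  have hmt : m ≤ t := min_le_right _ _
  set g : ℝ → ℝ≥0∞ := fun x => ENNReal.ofReal ((Real.sqrt (m - x))⁻¹) with hg
  have hgmeas : Measurable g :=
    (ENNReal.measurable_ofReal.comp ((Real.continuous_sqrt.measurable.comp
      (measurable_const.sub measurable_id)).inv))
  have step1 : ∫⁻ x in Icc p q, ENNReal.ofReal (negHalfPos (t - x)) ≤ ∫⁻ x in Icc p q, g x := by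
    refine setLIntegral_mono_ae hgmeas.aemeasurable ?_
    rw [ae_iff]
    refine measure_mono_null (fun x hx => ?_) (measure_singleton m)
    simp only [mem_setOf_eq, not_forall] at hx
    by_contra hxm
    simp only [mem_singleton_iff] at hxm
    rcases hx with ⟨hxI, hfg⟩
    apply hfg
    rcases lt_or_gt_of_ne hxm with hlt | hgt
    · have h1 : 0 < m - x := by linarith
      have h2 : m - x ≤ t - x := by linarith
      rw [negHalfPos_eq]
      apply ENNReal.ofReal_le_ofReal
      apply inv_anti₀ (Real.sqrt_pos.2 h1) (Real.sqrt_le_sqrt h2)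
    · -- x > m; since x ≤ q, must have m = t
      have hmt' : m = t := by
        rcases min_cases q t with ⟨h1, _⟩ | ⟨h1, h2⟩
        · exfalso; rw [hm, h1] at hgt; exact absurd hxI.2 (not_le.2 hgt)
        · rw [hm, h1]
      have : t - x < 0 := by rw [← hmt']; linarith
      rw [negHalfPos_eq, Real.sqrt_eq_zero_of_nonpos this.le, inv_zero]
      simp
  have step2 : ∫⁻ x in Icc p q, g x ≤
      (∫⁻ x in Icc (m - ℓ) m, g x) + ∫⁻ x in Ioi m, g x := by
    refine le_trans (lintegral_mono_set ?_) (lintegral_union_le _ _ _)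
    intro x hx
    rcases le_or_gt x m with h | h
    · exact Or.inl ⟨by linarith [hx.1, hx.2], h⟩
    · exact Or.inr h
  have step3 : ∫⁻ x in Ioi m, g x = 0 := by
    rw [setLIntegral_congr_fun measurableSet_Ioi (fun x hx => ?_),
      lintegral_zero]
    rw [hg]
    have : m - x ≤ 0 := by simp only [mem_Ioi] at hx; linarith
    simp [Real.sqrt_eq_zero_of_nonpos this]
  have hIcc : IntegrableOn (fun x => (Real.sqrt (m - x))⁻¹) (Icc (m - ℓ) m) := by
    have h1 : IntervalIntegrable (fun x : ℝ => x ^ (-(1/2) : ℝ)) volume 0 ℓ :=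
      intervalIntegral.intervalIntegrable_rpow' (by norm_num)
    have h2 : IntervalIntegrable (fun x : ℝ => (m - x) ^ (-(1/2) : ℝ)) volume (m - ℓ) m := by
      have := h1.comp_sub_left m
      simpa using this.symm
    rw [intervalIntegrable_iff_integrableOn_Icc_of_le (by linarith)] at h2
    refine h2.congr_fun (fun x hx => ?_) measurableSet_Icc
    have hmx : 0 ≤ m - x := by linarith [hx.2]
    beta_reduce; rw [Real.rpow_neg hmx, Real.sqrt_eq_rpow]
  have step4 : ∫⁻ x in Icc (m - ℓ) m, g x ≤ ENNReal.ofReal (2 * Real.sqrt ℓ) := by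
    rw [hg, ← ofReal_integral_eq_lintegral_ofReal hIcc
      (Filter.Eventually.of_forall fun x => by positivity)]
    apply ENNReal.ofReal_le_ofReal
    have heq : ∫ x in Icc (m - ℓ) m, (Real.sqrt (m - x))⁻¹ = ∫ x in (0:ℝ)..ℓ, x ^ (-(1/2):ℝ) := by
      rw [integral_Icc_eq_integral_Ioc, ← intervalIntegral.integral_of_le (by linarith : m - ℓ ≤ m)]
      have h0 : ∫ x in (m-ℓ)..m, (Real.sqrt (m - x))⁻¹ = ∫ x in (m-ℓ)..m, (m - x) ^ (-(1/2):ℝ) := by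
        refine intervalIntegral.integral_congr (fun x hx => ?_)
        rw [uIcc_of_le (by linarith : m - ℓ ≤ m)] at hx
        have hmx : 0 ≤ m - x := by linarith [hx.2]
        rw [Real.rpow_neg hmx, Real.sqrt_eq_rpow]
      rw [h0, intervalIntegral.integral_comp_sub_left (fun x => x ^ (-(1/2):ℝ)) m]
      norm_num
    rw [heq, integral_rpow (Or.inl (by norm_num)), Real.zero_rpow (by norm_num),
      Real.sqrt_eq_rpow]
    rw [show (-(1/2)+1 : ℝ) = 1/2 by norm_num, sub_zero]
    have := Real.rpow_nonneg hℓ (1/2)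
    rw [div_le_iff₀ (by norm_num : (0:ℝ) < 1/2)]
    linarith
  calc ∫⁻ x in Icc p q, ENNReal.ofReal (negHalfPos (t - x)) ≤ ∫⁻ x in Icc p q, g x := step1
    _ ≤ _ := step2
    _ ≤ _ := by rw [step3, add_zero]; exact step4
lemma jordan_step (ψ u : ℝ) (hu : 0 ≤ u) (hcos : 0 < Real.cos ψ)
    (hsin : |Real.sin ψ| ≤ u) (h1 : -(2*π) < ψ) (h2 : ψ < 2*π) :
    |ψ| ≤ π/2 * u ∨ |ψ - 2*π| ≤ π/2 * u ∨ |ψ + 2*π| ≤ π/2 * u := by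
  have hπ := Real.pi_pos
  have key : ∀ x : ℝ, |x| < π/2 → |Real.sin x| ≤ u → |x| ≤ π/2 * u := by
    intro x hx hs
    have h3 : 2/π * |x| ≤ Real.sin |x| :=
      Real.mul_le_sin (abs_nonneg x) (le_of_lt hx)
    have h4 : Real.sin |x| = |Real.sin x| := by
      rcases le_or_gt 0 x with h | h
      · rw [abs_of_nonneg h, abs_of_nonneg (Real.sin_nonneg_of_nonneg_of_le_pi h (by linarith [abs_of_nonneg h, hx]))]
      · rw [abs_of_neg h, Real.sin_neg, abs_of_nonpos ?_]
        have hx' : -π ≤ x := by rw [abs_of_neg h] at hx; linarith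
        exact Real.sin_nonpos_of_nonpos_of_neg_pi_le h.le hx'
    rw [h4] at h3
    have h5 := le_trans h3 hs
    calc |x| = π/2 * (2/π * |x|) := by field_simp
    _ ≤ π/2 * u := by apply mul_le_mul_of_nonneg_left h5 (by positivity)
  have band : |ψ| < π/2 ∨ (3*π/2 < ψ) ∨ (ψ < -(3*π/2)) := by
    by_contra hc
    push_neg at hc
    obtain ⟨b1, b2, b3⟩ := hc
    have : Real.cos |ψ| ≤ 0 := by
      apply Real.cos_nonpos_of_pi_div_two_le_of_le b1
      rcases le_or_gt 0 ψ with h | h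
      · rw [abs_of_nonneg h]; linarith
      · rw [abs_of_neg h]; linarith
    rw [Real.cos_abs] at this
    linarith
  rcases band with hb | hb | hb
  · exact Or.inl (key ψ hb hsin)
  · refine Or.inr (Or.inl (key _ ?_ ?_))
    · rw [abs_lt]; constructor <;> linarith
    · rw [Real.sin_sub_two_pi]; exact hsin
  · refine Or.inr (Or.inr (key _ ?_ ?_))
    · rw [abs_lt]; constructor <;> linarith
    · rw [Real.sin_add_two_pi]; exact hsin

lemma angular (ρ δ c₁ c₂ : ℝ) (hρ : 0 < ρ) (hδ : 0 ≤ δ)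
    (hh : δ < Real.sqrt (c₁^2 + c₂^2)) :
    volume {φ : ℝ | φ ∈ Ioo (-π) π ∧
        (ρ * Real.cos φ - c₁)^2 + (ρ * Real.sin φ - c₂)^2 ≤ δ^2}
      ≤ ENNReal.ofReal (3 * π * (δ / ρ)) := by
  have hπ := Real.pi_pos
  set h := Real.sqrt (c₁^2 + c₂^2) with hhdef
  have hh0 : 0 < h := lt_of_le_of_lt hδ hh
  have hsq : h^2 = c₁^2 + c₂^2 := Real.sq_sqrt (by positivity)
  set z : ℂ := ⟨c₁, c₂⟩ with hz
  have hznz : z ≠ 0 := by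
    intro hz0
    rw [Complex.ext_iff] at hz0
    simp only [Complex.zero_re, Complex.zero_im, hz] at hz0
    rw [hz0.1, hz0.2] at hsq
    nlinarith
  have habs : ‖z‖ = h := by
    rw [Complex.norm_def, Complex.normSq_apply, hhdef]
    simp [pow_two, hz]
  set α := Complex.arg z with hα
  have hαr : -π < α ∧ α ≤ π := ⟨Complex.neg_pi_lt_arg z, Complex.arg_le_pi z⟩
  have hc1 : c₁ = h * Real.cos α := by
    rw [hα, Complex.cos_arg hznz, habs]
    field_simp
    rfl
  have hc2 : c₂ = h * Real.sin α := by
    rw [hα, Complex.sin_arg, habs]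
    field_simp
    rfl
  set η := π/2 * (δ/ρ) with hη
  have hη0 : 0 ≤ η := by positivity
  have hsubset : {φ : ℝ | φ ∈ Ioo (-π) π ∧
        (ρ * Real.cos φ - c₁)^2 + (ρ * Real.sin φ - c₂)^2 ≤ δ^2} ⊆
      Icc (α - η) (α + η) ∪ Icc (α + 2*π - η) (α + 2*π + η) ∪
        Icc (α - 2*π - η) (α - 2*π + η) := by
    rintro φ ⟨hφI, hφ⟩
    have expand : (ρ * Real.cos φ - c₁)^2 + (ρ * Real.sin φ - c₂)^2
        = ρ^2 + h^2 - 2*ρ*h*Real.cos (φ - α) := by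
      rw [Real.cos_sub, hc1, hc2]
      linear_combination ρ^2 * (Real.sin_sq_add_cos_sq φ) + h^2 * (Real.sin_sq_add_cos_sq α)
    rw [expand] at hφ
    have hδ2 : δ^2 < h^2 := by nlinarith
    have hcospos : 0 < Real.cos (φ - α) := by
      by_contra hc
      push_neg at hc
      have h5 : (2*ρ*h) * Real.cos (φ - α) ≤ 0 :=
        mul_nonpos_of_nonneg_of_nonpos (by positivity) hc
      nlinarith [sq_nonneg ρ]
    have hcross : (ρ * h * Real.sin (φ - α))^2 ≤ δ^2 * h^2 := by
      have hid : ρ * h * Real.sin (φ - α) =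
          (ρ * Real.sin φ - c₂) * c₁ - (ρ * Real.cos φ - c₁) * c₂ := by
        rw [Real.sin_sub, hc1, hc2]; ring
      rw [← expand] at hφ
      rw [hid]
      nlinarith [sq_nonneg ((ρ * Real.sin φ - c₂) * c₂ + (ρ * Real.cos φ - c₁) * c₁)]
    have h6 : (ρ * Real.sin (φ - α))^2 ≤ δ^2 := by
      have e1 : (ρ * Real.sin (φ - α))^2 * h^2 ≤ δ^2 * h^2 := by
        calc (ρ * Real.sin (φ - α))^2 * h^2 = (ρ * h * Real.sin (φ - α))^2 := by ring
        _ ≤ δ^2 * h^2 := hcross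
      exact le_of_mul_le_mul_right e1 (pow_pos hh0 2)
    have hsin : |Real.sin (φ - α)| ≤ δ / ρ := by
      rw [le_div_iff₀ hρ]
      have ha : 0 ≤ |Real.sin (φ - α)| * ρ := by positivity
      have h8 : (|Real.sin (φ - α)| * ρ)^2 ≤ δ^2 := by
        rw [mul_pow, sq_abs]; calc Real.sin (φ - α)^2 * ρ^2 = (ρ * Real.sin (φ - α))^2 := by ring
        _ ≤ δ^2 := h6
      calc |Real.sin (φ - α)| * ρ = Real.sqrt ((|Real.sin (φ - α)| * ρ)^2) :=
            (Real.sqrt_sq ha).symm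
      _ ≤ Real.sqrt (δ^2) := Real.sqrt_le_sqrt h8
      _ = δ := Real.sqrt_sq hδ
    have hj3 := jordan_step (φ - α) (δ/ρ) (by positivity) hcospos hsin
      (by obtain ⟨a1, a2⟩ := hαr; obtain ⟨i1, i2⟩ := hφI; linarith)
      (by obtain ⟨a1, a2⟩ := hαr; obtain ⟨i1, i2⟩ := hφI; linarith)
    rcases hj3 with hj | hj | hj
    · rw [abs_le] at hj
      exact Or.inl (Or.inl ⟨by linarith [hj.1], by linarith [hj.2]⟩)
    · rw [abs_le] at hj
      exact Or.inl (Or.inr ⟨by linarith [hj.1], by linarith [hj.2]⟩)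
    · rw [abs_le] at hj
      exact Or.inr ⟨by linarith [hj.1], by linarith [hj.2]⟩
  refine le_trans (measure_mono hsubset) ?_
  have v1 : volume (Icc (α - η) (α + η)) = ENNReal.ofReal (2*η) := by
    rw [Real.volume_Icc]; congr 1; ring
  have v2 : volume (Icc (α + 2*π - η) (α + 2*π + η)) = ENNReal.ofReal (2*η) := by
    rw [Real.volume_Icc]; congr 1; ring
  have v3 : volume (Icc (α - 2*π - η) (α - 2*π + η)) = ENNReal.ofReal (2*η) := by
    rw [Real.volume_Icc]; congr 1; ring
  refine le_trans (measure_union_le _ _) ?_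
  refine le_trans (add_le_add_left (measure_union_le _ _) _) ?_
  rw [v1, v2, v3, ← ENNReal.ofReal_add (by positivity) (by positivity),
    ← ENNReal.ofReal_add (by positivity) (by positivity)]
  apply ENNReal.ofReal_le_ofReal
  rw [hη]; apply le_of_eq; ring
theorem lintegral_polar (f : ℝ × ℝ → ℝ≥0∞) :
    ∫⁻ p in polarCoord.target, ENNReal.ofReal p.1 * f (polarCoord.symm p) = ∫⁻ p, f p := by
  set B : ℝ × ℝ → ℝ × ℝ →L[ℝ] ℝ × ℝ := fun p =>
    LinearMap.toContinuousLinearMap (Matrix.toLin (Module.Basis.finTwoProd ℝ) (Module.Basis.finTwoProd ℝ)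
      !![cos p.2, -p.1 * sin p.2; sin p.2, p.1 * cos p.2])
  have A : ∀ p ∈ polarCoord.target, HasFDerivWithinAt polarCoord.symm (B p) polarCoord.target p :=
    fun p _ => (hasFDerivAt_polarCoord_symm p).hasFDerivWithinAt
  have B_det : ∀ p, (B p).det = p.1 := by
    intro p
    conv_rhs => rw [← one_mul p.1, ← cos_sq_add_sin_sq p.2]
    simp only [B, neg_mul, LinearMap.det_toContinuousLinearMap, LinearMap.det_toLin,
      Matrix.det_fin_two_of, sub_neg_eq_add]
    ring
  symm
  calc
    ∫⁻ p, f p = ∫⁻ p in polarCoord.source, f p := by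
      rw [← setLIntegral_univ]
      exact (setLIntegral_congr polarCoord_source_ae_eq_univ.symm)
    _ = ∫⁻ p in polarCoord.symm '' polarCoord.target, f p := by
      rw [polarCoord.symm_image_target_eq_source]
    _ = ∫⁻ p in polarCoord.target, ENNReal.ofReal |(B p).det| * f (polarCoord.symm p) := by
      exact lintegral_image_eq_lintegral_abs_det_fderiv_mul volume
        polarCoord.open_target.measurableSet A polarCoord.symm.injOn f
    _ = ∫⁻ p in polarCoord.target, ENNReal.ofReal p.1 * f (polarCoord.symm p) := by
      refine setLIntegral_congr_fun polarCoord.open_target.measurableSet ?_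
      intro p hp
      beta_reduce
      rw [B_det, abs_of_pos hp.1]

lemma bound_P (t ε c₁ c₂ : ℝ) (ht : 0 < t) (hε : 0 < ε) (hε1 : ε ≤ 1) :
    (∫⁻ y : ℝ × ℝ, (Icc (c₁ - 2*ε) (c₁ + 2*ε) ×ˢ Icc (c₂ - 2*ε) (c₂ + 2*ε)).indicator
      (fun y => ENNReal.ofReal (negHalfPos (t^2 - (y.1^2 + y.2^2)))) y)
      ≤ ENNReal.ofReal (1000 * min t (t ^ (-(1/2) : ℝ))) := by
  have hπ := Real.pi_pos
  have hπ4 := Real.pi_le_four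
  set sq : Set (ℝ × ℝ) := Icc (c₁ - 2*ε) (c₁ + 2*ε) ×ˢ Icc (c₂ - 2*ε) (c₂ + 2*ε) with hsq
  have hsqm : MeasurableSet sq := measurableSet_Icc.prod measurableSet_Icc
  set gW : ℝ × ℝ → ℝ≥0∞ := fun y => ENNReal.ofReal (negHalfPos (t^2 - (y.1^2 + y.2^2))) with hgW
  set W₂ : ℝ × ℝ → ℝ≥0∞ := fun y => sq.indicator gW y with hW₂
  have hgWm : Measurable gW := by
    apply ENNReal.measurable_ofReal.comp
    apply measurable_negHalfPos.comp
    exact (continuous_const.sub ((continuous_fst.pow 2).add (continuous_snd.pow 2))).measurable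
  have hW₂m : Measurable W₂ := hgWm.indicator hsqm
  -- polar change of variables
  have hpolar : (∫⁻ y : ℝ × ℝ, W₂ y)
      = ∫⁻ p in polarCoord.target, ENNReal.ofReal p.1 * W₂ (polarCoord.symm p) :=
    (lintegral_polar W₂).symm
  -- to iterated integral
  set Hfun : ℝ × ℝ → ℝ≥0∞ :=
    fun p => ENNReal.ofReal p.1 * W₂ (p.1 * Real.cos p.2, p.1 * Real.sin p.2) with hHfun
  have hHm : Measurable Hfun := by
    apply (ENNReal.measurable_ofReal.comp measurable_fst).mul
    apply hW₂m.comp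
    exact ((continuous_fst.mul (Real.continuous_cos.comp continuous_snd)).prodMk
      (continuous_fst.mul (Real.continuous_sin.comp continuous_snd))).measurable
  have hiter : (∫⁻ y : ℝ × ℝ, W₂ y)
      = ∫⁻ ρ in Ioi (0:ℝ), ∫⁻ φ in Ioo (-π) π, Hfun (ρ, φ) := by
    rw [hpolar]
    have h1 : ∀ p : ℝ × ℝ, ENNReal.ofReal p.1 * W₂ (polarCoord.symm p) = Hfun p := by
      intro p; rw [polarCoord_symm_apply]
    simp_rw [h1]
    rw [polarCoord_target, Measure.volume_eq_prod, ← Measure.prod_restrict,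
      lintegral_prod _ hHm.aemeasurable]
  -- the angular slice measure
  set m : ℝ → ℝ≥0∞ := fun ρ =>
    volume ({φ : ℝ | (ρ * Real.cos φ, ρ * Real.sin φ) ∈ sq} ∩ Ioo (-π) π) with hm
  have hAm : ∀ ρ : ℝ, MeasurableSet {φ : ℝ | (ρ * Real.cos φ, ρ * Real.sin φ) ∈ sq} := by
    intro ρ
    exact hsqm.preimage ((continuous_const.mul Real.continuous_cos).prodMk
      (continuous_const.mul Real.continuous_sin)).measurable
  have inner_eq : ∀ ρ : ℝ, (∫⁻ φ in Ioo (-π) π, Hfun (ρ, φ))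
      = ENNReal.ofReal ρ * (ENNReal.ofReal (negHalfPos (t^2 - ρ^2)) * m ρ) := by
    intro ρ
    have hval : ∀ φ : ℝ, W₂ (ρ * Real.cos φ, ρ * Real.sin φ)
        = ({φ : ℝ | (ρ * Real.cos φ, ρ * Real.sin φ) ∈ sq}).indicator
            (fun _ => ENNReal.ofReal (negHalfPos (t^2 - ρ^2))) φ := by
      intro φ
      rw [hW₂]
      simp only [Set.indicator_apply, mem_setOf_eq]
      split_ifs with hmem
      · rw [hgW]
        have harg : t ^ 2 - ((ρ * Real.cos φ)^2 + (ρ * Real.sin φ)^2) = t^2 - ρ^2 := by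
          linear_combination (-(Real.sin_sq_add_cos_sq φ) + 1) * ρ^2
        show ENNReal.ofReal (negHalfPos (t ^ 2 - ((ρ * Real.cos φ)^2 + (ρ * Real.sin φ)^2))) = _
        rw [harg]
      · rfl
    calc (∫⁻ φ in Ioo (-π) π, Hfun (ρ, φ))
        = ∫⁻ φ in Ioo (-π) π, ENNReal.ofReal ρ *
            ({φ : ℝ | (ρ * Real.cos φ, ρ * Real.sin φ) ∈ sq}).indicator
            (fun _ => ENNReal.ofReal (negHalfPos (t^2 - ρ^2))) φ := by
          apply setLIntegral_congr_fun measurableSet_Ioo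
          exact (fun φ _ => by rw [hHfun]; simp only; rw [hval φ])
    _ = ENNReal.ofReal ρ * ∫⁻ φ in Ioo (-π) π,
            ({φ : ℝ | (ρ * Real.cos φ, ρ * Real.sin φ) ∈ sq}).indicator
            (fun _ => ENNReal.ofReal (negHalfPos (t^2 - ρ^2))) φ :=
          lintegral_const_mul' _ _ ENNReal.ofReal_ne_top
    _ = ENNReal.ofReal ρ * (ENNReal.ofReal (negHalfPos (t^2 - ρ^2)) * m ρ) := by
          rw [lintegral_indicator (hAm ρ), setLIntegral_const, Measure.restrict_apply (hAm ρ), hm]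
  -- Bound A : total mass ≤ 4 π t
  have boundA : (∫⁻ y : ℝ × ℝ, W₂ y) ≤ ENNReal.ofReal (4 * π * t) := by
    rw [hiter]
    have step : ∀ ρ ∈ Ioi (0:ℝ), (∫⁻ φ in Ioo (-π) π, Hfun (ρ, φ))
        ≤ ENNReal.ofReal (2 * π * Real.sqrt t) * ENNReal.ofReal (negHalfPos (t - ρ)) := by
      intro ρ hρ
      rw [inner_eq ρ]
      have h1 : m ρ ≤ ENNReal.ofReal (2 * π) := by
        rw [hm]
        refine le_trans (measure_mono inter_subset_right) ?_
        rw [Real.volume_Ioo]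
        apply ENNReal.ofReal_le_ofReal; linarith
      calc ENNReal.ofReal ρ * (ENNReal.ofReal (negHalfPos (t^2 - ρ^2)) * m ρ)
          = (ENNReal.ofReal ρ * ENNReal.ofReal (negHalfPos (t^2 - ρ^2))) * m ρ := by ring
      _ ≤ ENNReal.ofReal (Real.sqrt t * negHalfPos (t - ρ)) * ENNReal.ofReal (2 * π) := by
          apply mul_le_mul' _ h1
          rw [← ENNReal.ofReal_mul (le_of_lt (mem_Ioi.1 hρ))]
          exact ENNReal.ofReal_le_ofReal (radial2 t ρ ht (le_of_lt (mem_Ioi.1 hρ)))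
      _ = ENNReal.ofReal (2 * π * Real.sqrt t) * ENNReal.ofReal (negHalfPos (t - ρ)) := by
          rw [← ENNReal.ofReal_mul (mul_nonneg (Real.sqrt_nonneg t) (negHalfPos_nonneg _)),
            ← ENNReal.ofReal_mul (by positivity)]
          congr 1
          ring
    have hnm : Measurable fun ρ : ℝ => ENNReal.ofReal (negHalfPos (t - ρ)) :=
      ENNReal.measurable_ofReal.comp
        (measurable_negHalfPos.comp (measurable_const.sub measurable_id))
    calc (∫⁻ ρ in Ioi (0:ℝ), ∫⁻ φ in Ioo (-π) π, Hfun (ρ, φ))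
        ≤ ∫⁻ ρ in Ioi (0:ℝ), ENNReal.ofReal (2 * π * Real.sqrt t) *
            ENNReal.ofReal (negHalfPos (t - ρ)) := by
          refine setLIntegral_mono (measurable_const.mul hnm) step
    _ = ENNReal.ofReal (2 * π * Real.sqrt t) * ∫⁻ ρ in Ioi (0:ℝ),
            ENNReal.ofReal (negHalfPos (t - ρ)) :=
          lintegral_const_mul' _ _ ENNReal.ofReal_ne_top
    _ ≤ ENNReal.ofReal (2 * π * Real.sqrt t) * ENNReal.ofReal (2 * Real.sqrt t) := by
          refine mul_le_mul' le_rfl ?_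
          calc (∫⁻ ρ in Ioi (0:ℝ), ENNReal.ofReal (negHalfPos (t - ρ)))
              ≤ ∫⁻ ρ in Icc (0:ℝ) t ∪ Ioi t, ENNReal.ofReal (negHalfPos (t - ρ)) := by
                apply lintegral_mono_set
                intro x hx
                rcases le_or_gt x t with h | h
                · exact Or.inl ⟨le_of_lt hx, h⟩
                · exact Or.inr h
          _ ≤ (∫⁻ ρ in Icc (0:ℝ) t, ENNReal.ofReal (negHalfPos (t - ρ)))
                + ∫⁻ ρ in Ioi t, ENNReal.ofReal (negHalfPos (t - ρ)) :=
              lintegral_union_le _ _ _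
          _ ≤ ENNReal.ofReal (2 * Real.sqrt t) + 0 := by
              refine add_le_add (lem1d t t 0 t ht.le (by linarith)) (le_of_eq ?_)
              rw [setLIntegral_congr_fun measurableSet_Ioi
                ((fun ρ hρ => ?_)), lintegral_zero]
              rw [negHalfPos_eq, Real.sqrt_eq_zero_of_nonpos (by simp only [mem_Ioi] at hρ; linarith),
                inv_zero, ENNReal.ofReal_zero]
          _ = ENNReal.ofReal (2 * Real.sqrt t) := add_zero _
    _ = ENNReal.ofReal (4 * π * t) := by
          rw [← ENNReal.ofReal_mul (by positivity)]
          congr 1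
          rw [show 2 * π * Real.sqrt t * (2 * Real.sqrt t)
            = 4 * π * (Real.sqrt t * Real.sqrt t) by ring, Real.mul_self_sqrt ht.le]
  -- Bound B : total mass ≤ 240 / sqrt t
  set hc : ℝ := Real.sqrt (c₁^2 + c₂^2) with hhc
  have claim_sub : ∀ ρ : ℝ, 0 < ρ → ∀ φ : ℝ,
      (ρ * Real.cos φ, ρ * Real.sin φ) ∈ sq → |ρ - hc| ≤ 3*ε := by
    intro ρ hρ φ hmem
    rw [hsq, mem_prod, mem_Icc, mem_Icc] at hmem
    obtain ⟨⟨u1, u2⟩, v1, v2⟩ := hmem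
    simp only at u1 u2 v1 v2
    have hnorm : Real.sqrt ((ρ * Real.cos φ)^2 + (ρ * Real.sin φ)^2) = ρ := by
      have harg : (ρ * Real.cos φ)^2 + (ρ * Real.sin φ)^2 = ρ^2 := by
        linear_combination ρ^2 * (Real.sin_sq_add_cos_sq φ)
      rw [harg, Real.sqrt_sq hρ.le]
    have htri := rev_tri (ρ * Real.cos φ) (ρ * Real.sin φ) c₁ c₂
    rw [hnorm] at htri
    have hcoord : (ρ * Real.cos φ - c₁)^2 + (ρ * Real.sin φ - c₂)^2 ≤ (3*ε)^2 := by
      have h1 : (ρ * Real.cos φ - c₁)^2 ≤ (2*ε)^2 := by nlinarith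
      have h2 : (ρ * Real.sin φ - c₂)^2 ≤ (2*ε)^2 := by nlinarith
      nlinarith
    refine le_trans htri (le_trans (Real.sqrt_le_sqrt hcoord) ?_)
    rw [Real.sqrt_sq (by positivity)]
  have m_bound : ∀ ρ : ℝ, 0 < ρ → ENNReal.ofReal ρ * m ρ
      ≤ ENNReal.ofReal (12 * π * ε) *
        (Icc (hc - 3*ε) (hc + 3*ε)).indicator (fun _ => (1:ℝ≥0∞)) ρ := by
    intro ρ hρ
    by_cases hmem : ρ ∈ Icc (hc - 3*ε) (hc + 3*ε)
    · rw [indicator_of_mem hmem, mul_one]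
      by_cases hρ6 : ρ ≤ 6*ε
      · have h1 : m ρ ≤ ENNReal.ofReal (2*π) := by
          rw [hm]
          refine le_trans (measure_mono inter_subset_right) ?_
          rw [Real.volume_Ioo]
          exact ENNReal.ofReal_le_ofReal (by linarith)
        calc ENNReal.ofReal ρ * m ρ ≤ ENNReal.ofReal ρ * ENNReal.ofReal (2*π) :=
              mul_le_mul' le_rfl h1
        _ = ENNReal.ofReal (ρ * (2*π)) := (ENNReal.ofReal_mul hρ.le).symm
        _ ≤ ENNReal.ofReal (12 * π * ε) := ENNReal.ofReal_le_ofReal (by nlinarith)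
      · push_neg at hρ6
        have hh3 : 3*ε < hc := by
          rw [mem_Icc] at hmem
          linarith [hmem.2]
        have hang := angular ρ (3*ε) c₁ c₂ hρ (by positivity) hh3
        have hsub2 : {φ : ℝ | (ρ * Real.cos φ, ρ * Real.sin φ) ∈ sq} ∩ Ioo (-π) π ⊆
            {φ : ℝ | φ ∈ Ioo (-π) π ∧
              (ρ * Real.cos φ - c₁)^2 + (ρ * Real.sin φ - c₂)^2 ≤ (3*ε)^2} := by
          rintro φ ⟨hA, hI⟩
          rw [mem_setOf_eq, hsq, mem_prod, mem_Icc, mem_Icc] at hA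
          obtain ⟨⟨u1, u2⟩, v1, v2⟩ := hA
          simp only at u1 u2 v1 v2
          refine ⟨hI, ?_⟩
          have h1 : (ρ * Real.cos φ - c₁)^2 ≤ (2*ε)^2 := by nlinarith
          have h2 : (ρ * Real.sin φ - c₂)^2 ≤ (2*ε)^2 := by nlinarith
          nlinarith
        have h2 : m ρ ≤ ENNReal.ofReal (3 * π * (3*ε / ρ)) := by
          rw [hm]
          exact le_trans (measure_mono hsub2) hang
        calc ENNReal.ofReal ρ * m ρ ≤ ENNReal.ofReal ρ * ENNReal.ofReal (3 * π * (3*ε / ρ)) :=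
              mul_le_mul' le_rfl h2
        _ = ENNReal.ofReal (ρ * (3 * π * (3*ε / ρ))) := (ENNReal.ofReal_mul hρ.le).symm
        _ ≤ ENNReal.ofReal (12 * π * ε) := by
            apply ENNReal.ofReal_le_ofReal
            rw [show ρ * (3 * π * (3*ε / ρ)) = 9 * π * ε * (ρ / ρ) by ring,
              div_self (ne_of_gt hρ), mul_one]
            nlinarith
    · rw [indicator_of_notMem hmem, mul_zero]
      have hempty : {φ : ℝ | (ρ * Real.cos φ, ρ * Real.sin φ) ∈ sq} ∩ Ioo (-π) π = ∅ := by
        rw [eq_empty_iff_forall_notMem]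
        rintro φ ⟨hA, hI⟩
        have := abs_le.1 (claim_sub ρ hρ φ hA)
        exact hmem (mem_Icc.2 ⟨by linarith [this.1], by linarith [this.2]⟩)
      rw [hm]
      simp only [hempty, measure_empty, mul_zero]
      exact le_rfl
  have hnm2 : Measurable (fun ρ : ℝ => ENNReal.ofReal (negHalfPos (t - ρ))) :=
    ENNReal.measurable_ofReal.comp
      (measurable_negHalfPos.comp (measurable_const.sub measurable_id))
  have boundB : (∫⁻ y : ℝ × ℝ, W₂ y) ≤ ENNReal.ofReal (240 * (Real.sqrt t)⁻¹) := by
    rw [hiter]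
    have step : ∀ ρ ∈ Ioi (0:ℝ), (∫⁻ φ in Ioo (-π) π, Hfun (ρ, φ))
        ≤ (ENNReal.ofReal ((Real.sqrt t)⁻¹) * ENNReal.ofReal (12*π*ε)) *
          (Icc (hc - 3*ε) (hc + 3*ε)).indicator
            (fun ρ => ENNReal.ofReal (negHalfPos (t - ρ))) ρ := by
      intro ρ hρ'
      have hρ : 0 < ρ := mem_Ioi.1 hρ'
      rw [inner_eq ρ]
      calc ENNReal.ofReal ρ * (ENNReal.ofReal (negHalfPos (t^2 - ρ^2)) * m ρ)
          = ENNReal.ofReal (negHalfPos (t^2 - ρ^2)) * (ENNReal.ofReal ρ * m ρ) := by ring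
      _ ≤ ENNReal.ofReal ((Real.sqrt t)⁻¹ * negHalfPos (t - ρ)) *
            (ENNReal.ofReal (12 * π * ε) *
              (Icc (hc - 3*ε) (hc + 3*ε)).indicator (fun _ => (1:ℝ≥0∞)) ρ) :=
          mul_le_mul' (ENNReal.ofReal_le_ofReal (radial1 t ρ ht hρ.le)) (m_bound ρ hρ)
      _ = (ENNReal.ofReal ((Real.sqrt t)⁻¹) * ENNReal.ofReal (12*π*ε)) *
            (Icc (hc - 3*ε) (hc + 3*ε)).indicator
              (fun ρ => ENNReal.ofReal (negHalfPos (t - ρ))) ρ := by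
          rw [ENNReal.ofReal_mul (by positivity)]
          by_cases hmem : ρ ∈ Icc (hc - 3*ε) (hc + 3*ε)
          · rw [indicator_of_mem hmem, indicator_of_mem hmem]
            ring
          · rw [indicator_of_notMem hmem, indicator_of_notMem hmem]
            simp only [mul_zero]
    calc (∫⁻ ρ in Ioi (0:ℝ), ∫⁻ φ in Ioo (-π) π, Hfun (ρ, φ))
        ≤ ∫⁻ ρ in Ioi (0:ℝ), (ENNReal.ofReal ((Real.sqrt t)⁻¹) * ENNReal.ofReal (12*π*ε)) *
            (Icc (hc - 3*ε) (hc + 3*ε)).indicator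
              (fun ρ => ENNReal.ofReal (negHalfPos (t - ρ))) ρ :=
          setLIntegral_mono (measurable_const.mul (hnm2.indicator measurableSet_Icc)) step
    _ = (ENNReal.ofReal ((Real.sqrt t)⁻¹) * ENNReal.ofReal (12*π*ε)) *
          ∫⁻ ρ in Ioi (0:ℝ), (Icc (hc - 3*ε) (hc + 3*ε)).indicator
            (fun ρ => ENNReal.ofReal (negHalfPos (t - ρ))) ρ :=
        lintegral_const_mul' _ _ (ENNReal.mul_ne_top ENNReal.ofReal_ne_top ENNReal.ofReal_ne_top)
    _ ≤ (ENNReal.ofReal ((Real.sqrt t)⁻¹) * ENNReal.ofReal (12*π*ε)) *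
          ENNReal.ofReal (2 * Real.sqrt (6*ε)) := by
        refine mul_le_mul' le_rfl ?_
        rw [lintegral_indicator measurableSet_Icc, Measure.restrict_restrict measurableSet_Icc]
        refine le_trans (lintegral_mono_set inter_subset_left)
          (lem1d t (6*ε) (hc - 3*ε) (hc + 3*ε) (by positivity) (by linarith))
    _ ≤ ENNReal.ofReal (240 * (Real.sqrt t)⁻¹) := by
        rw [← ENNReal.ofReal_mul (by positivity), ← ENNReal.ofReal_mul (by positivity)]
        apply ENNReal.ofReal_le_ofReal
        have h6 : Real.sqrt (6*ε) ≤ 2.5 := by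
          rw [show (2.5:ℝ) = Real.sqrt (2.5^2) from (Real.sqrt_sq (by norm_num)).symm]
          apply Real.sqrt_le_sqrt; nlinarith
        have hπε : π * ε ≤ 4 := by nlinarith
        have hmain : 12*π*ε * (2 * Real.sqrt (6*ε)) ≤ 240 := by
          nlinarith [Real.sqrt_nonneg (6*ε)]
        have hs : 0 ≤ (Real.sqrt t)⁻¹ := by positivity
        calc (Real.sqrt t)⁻¹ * (12*π*ε) * (2 * Real.sqrt (6*ε))
            = (Real.sqrt t)⁻¹ * (12*π*ε * (2 * Real.sqrt (6*ε))) := by ring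
        _ ≤ (Real.sqrt t)⁻¹ * 240 := mul_le_mul_of_nonneg_left hmain hs
        _ = 240 * (Real.sqrt t)⁻¹ := mul_comm _ _
  rcases le_total t (t ^ (-(1/2):ℝ)) with hmin | hmin
  · rw [min_eq_left hmin]
    refine le_trans boundA (ENNReal.ofReal_le_ofReal ?_)
    nlinarith
  · rw [min_eq_right hmin]
    refine le_trans boundB (ENNReal.ofReal_le_ofReal ?_)
    have hrp : (Real.sqrt t)⁻¹ = t ^ (-(1/2):ℝ) := by
      rw [Real.rpow_neg ht.le, Real.sqrt_eq_rpow]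
    rw [hrp]
    nlinarith [Real.rpow_nonneg ht.le (-(1/2):ℝ)]

lemma cos_lip (a b : ℝ) : |Real.cos a - Real.cos b| ≤ |a - b| := by
  rw [Real.cos_sub_cos, abs_mul, abs_mul, abs_neg]
  calc |(2:ℝ)| * |Real.sin ((a+b)/2)| * |Real.sin ((a-b)/2)|
      ≤ |(2:ℝ)| * 1 * |(a-b)/2| := by
        apply mul_le_mul (mul_le_mul le_rfl (abs_le.2 ⟨Real.neg_one_le_sin _, Real.sin_le_one _⟩)
          (abs_nonneg _) (abs_nonneg _)) (Real.abs_sin_le_abs) (abs_nonneg _) (by positivity)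
  _ = |a - b| := by rw [abs_two, abs_div, abs_two]; ring

lemma sin_lip (a b : ℝ) : |Real.sin a - Real.sin b| ≤ |a - b| := by
  rw [Real.sin_sub_sin, abs_mul, abs_mul]
  calc |(2:ℝ)| * |Real.sin ((a-b)/2)| * |Real.cos ((a+b)/2)|
      ≤ |(2:ℝ)| * |(a-b)/2| * 1 := by
        apply mul_le_mul (mul_le_mul le_rfl (Real.abs_sin_le_abs) (abs_nonneg _) (abs_nonneg _))
          (abs_le.2 ⟨Real.neg_one_le_cos _, Real.cos_le_one _⟩) (abs_nonneg _) (by positivity)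
  _ = |a - b| := by rw [abs_two, abs_div, abs_two]; ring

lemma bound_J (ε r₀ θ₀ r₁ t : ℝ) (hε : 0 < ε) (hr₀ : 0 < r₀) (ht : 0 < t) :
    (∫⁻ r in Ioc r₀ (r₀ + ε),
      (∫⁻ θ in {θ : ℝ | |θ - θ₀| ≤ ε / r₀ ∧ |θ| ≤ π},
        ENNReal.ofReal (negHalfPos (t^2 - r₁^2 - r^2 + 2 * r₁ * r * Real.cos θ))) *
      ENNReal.ofReal r)
    ≤ ∫⁻ y : ℝ × ℝ, (Icc (r₀ * Real.cos θ₀ - r₁ - 2*ε) (r₀ * Real.cos θ₀ - r₁ + 2*ε) ×ˢ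
        Icc (r₀ * Real.sin θ₀ - 2*ε) (r₀ * Real.sin θ₀ + 2*ε)).indicator
      (fun y => ENNReal.ofReal (negHalfPos (t^2 - (y.1^2 + y.2^2)))) y := by
  have hπ := Real.pi_pos
  set c₁ : ℝ := r₀ * Real.cos θ₀ - r₁ with hc₁
  set c₂ : ℝ := r₀ * Real.sin θ₀ with hc₂
  set sq : Set (ℝ × ℝ) := Icc (c₁ - 2*ε) (c₁ + 2*ε) ×ˢ Icc (c₂ - 2*ε) (c₂ + 2*ε) with hsq
  have hsqm : MeasurableSet sq := measurableSet_Icc.prod measurableSet_Icc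
  set gW : ℝ × ℝ → ℝ≥0∞ := fun y => ENNReal.ofReal (negHalfPos (t^2 - (y.1^2 + y.2^2))) with hgW
  set W₂ : ℝ × ℝ → ℝ≥0∞ := fun y => sq.indicator gW y with hW₂
  have hgWm : Measurable gW := by
    apply ENNReal.measurable_ofReal.comp
    apply measurable_negHalfPos.comp
    exact (continuous_const.sub ((continuous_fst.pow 2).add (continuous_snd.pow 2))).measurable
  have hW₂m : Measurable W₂ := hgWm.indicator hsqm
  set W : ℝ × ℝ → ℝ≥0∞ := fun x => W₂ (x + (-r₁, 0)) with hW
  have hWm : Measurable W := hW₂m.comp (measurable_add_const _)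
  set S : Set ℝ := {θ : ℝ | |θ - θ₀| ≤ ε / r₀ ∧ |θ| ≤ π} with hS
  have hS_sub : S ⊆ Icc (-π) π := fun θ hθ => by
    rw [mem_Icc]; exact abs_le.1 hθ.2
  -- the master pointwise bound
  have master : ∀ r ∈ Ioc r₀ (r₀ + ε), ∀ θ ∈ S,
      ENNReal.ofReal (negHalfPos (t^2 - r₁^2 - r^2 + 2 * r₁ * r * Real.cos θ))
        ≤ W (r * Real.cos θ, r * Real.sin θ) := by
    intro r hr θ hθ
    obtain ⟨hr1, hr2⟩ := hr
    obtain ⟨hθ1, _⟩ := hθ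
    have hrpos : 0 < r := lt_trans hr₀ hr1
    have hbase : r₀ * |θ - θ₀| ≤ ε := by
      calc r₀ * |θ - θ₀| ≤ r₀ * (ε / r₀) :=
            mul_le_mul_of_nonneg_left hθ1 hr₀.le
      _ = ε := by field_simp
    have hcos : |r * Real.cos θ - r₀ * Real.cos θ₀| ≤ 2*ε := by
      have hd : r * Real.cos θ - r₀ * Real.cos θ₀
          = (r - r₀) * Real.cos θ + r₀ * (Real.cos θ - Real.cos θ₀) := by ring
      rw [hd]
      calc |(r - r₀) * Real.cos θ + r₀ * (Real.cos θ - Real.cos θ₀)|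
          ≤ |(r - r₀) * Real.cos θ| + |r₀ * (Real.cos θ - Real.cos θ₀)| := abs_add_le _ _
      _ ≤ ε + ε := by
          apply add_le_add
          · rw [abs_mul]
            calc |r - r₀| * |Real.cos θ| ≤ ε * 1 := by
                  apply mul_le_mul _ (Real.abs_cos_le_one θ) (abs_nonneg _) hε.le
                  rw [abs_of_nonneg (by linarith)]; linarith
            _ = ε := mul_one ε
          · rw [abs_mul, abs_of_nonneg hr₀.le]
            exact le_trans (mul_le_mul_of_nonneg_left (cos_lip θ θ₀) hr₀.le) hbase
      _ = 2*ε := by ring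
    have hsin : |r * Real.sin θ - r₀ * Real.sin θ₀| ≤ 2*ε := by
      have hd : r * Real.sin θ - r₀ * Real.sin θ₀
          = (r - r₀) * Real.sin θ + r₀ * (Real.sin θ - Real.sin θ₀) := by ring
      rw [hd]
      calc |(r - r₀) * Real.sin θ + r₀ * (Real.sin θ - Real.sin θ₀)|
          ≤ |(r - r₀) * Real.sin θ| + |r₀ * (Real.sin θ - Real.sin θ₀)| := abs_add_le _ _
      _ ≤ ε + ε := by
          apply add_le_add
          · rw [abs_mul]
            calc |r - r₀| * |Real.sin θ| ≤ ε * 1 := by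
                  apply mul_le_mul _ (abs_le.2 ⟨Real.neg_one_le_sin _, Real.sin_le_one _⟩)
                    (abs_nonneg _) hε.le
                  rw [abs_of_nonneg (by linarith)]; linarith
            _ = ε := mul_one ε
          · rw [abs_mul, abs_of_nonneg hr₀.le]
            exact le_trans (mul_le_mul_of_nonneg_left (sin_lip θ θ₀) hr₀.le) hbase
      _ = 2*ε := by ring
    have hmem : ((r * Real.cos θ, r * Real.sin θ) : ℝ × ℝ) + (-r₁, 0) ∈ sq := by
      rw [hsq, Prod.mk_add_mk, mem_prod, mem_Icc, mem_Icc]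
      have h1 := abs_le.1 hcos
      have h2 := abs_le.1 hsin
      constructor
      · constructor <;> [skip; skip] <;> simp only [hc₁] <;>
          [linarith [h1.1]; linarith [h1.2]]
      · constructor <;> simp only [hc₂, add_zero] <;>
          [linarith [h2.1]; linarith [h2.2]]
    rw [hW]
    simp only
    rw [hW₂]
    simp only
    rw [indicator_of_mem hmem, hgW]
    have harg : t^2 - r₁^2 - r^2 + 2 * r₁ * r * Real.cos θ
        = t^2 - ((r * Real.cos θ + -r₁)^2 + (r * Real.sin θ + 0)^2) := by
      linear_combination r^2 * Real.sin_sq_add_cos_sq θ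
    rw [Prod.mk_add_mk]
    simp only
    rw [harg]
  -- measurability of the iterated integrand
  have hHm : Measurable (fun p : ℝ × ℝ =>
      ENNReal.ofReal p.1 * W (p.1 * Real.cos p.2, p.1 * Real.sin p.2)) := by
    apply (ENNReal.measurable_ofReal.comp measurable_fst).mul
    apply hWm.comp
    exact ((continuous_fst.mul (Real.continuous_cos.comp continuous_snd)).prodMk
      (continuous_fst.mul (Real.continuous_sin.comp continuous_snd))).measurable
  have houter : ∀ T : Set ℝ, Measurable (fun r : ℝ =>
      ∫⁻ θ in T, ENNReal.ofReal r * W (r * Real.cos θ, r * Real.sin θ)) := by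
    intro T
    exact Measurable.lintegral_prod_right (f := fun r θ =>
      ENNReal.ofReal r * W (r * Real.cos θ, r * Real.sin θ)) hHm
  calc (∫⁻ r in Ioc r₀ (r₀ + ε), (∫⁻ θ in S,
        ENNReal.ofReal (negHalfPos (t^2 - r₁^2 - r^2 + 2 * r₁ * r * Real.cos θ))) *
        ENNReal.ofReal r)
      = ∫⁻ r in Ioc r₀ (r₀ + ε), ∫⁻ θ in S,
          ENNReal.ofReal (negHalfPos (t^2 - r₁^2 - r^2 + 2 * r₁ * r * Real.cos θ)) *
          ENNReal.ofReal r := by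
        refine setLIntegral_congr_fun measurableSet_Ioc (id
          (fun r _ => ?_))
        exact (lintegral_mul_const' _ _ ENNReal.ofReal_ne_top).symm
  _ ≤ ∫⁻ r in Ioc r₀ (r₀ + ε), ∫⁻ θ in S,
        ENNReal.ofReal r * W (r * Real.cos θ, r * Real.sin θ) := by
      refine setLIntegral_mono (houter S) (fun r hr => ?_)
      refine setLIntegral_mono (measurable_const.mul (hWm.comp
        (((continuous_const.mul Real.continuous_cos).prodMk
          (continuous_const.mul Real.continuous_sin)).measurable))) (fun θ hθ => ?_)
      rw [mul_comm]
      exact mul_le_mul' le_rfl (master r hr θ hθ)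
  _ ≤ ∫⁻ r in Ioc r₀ (r₀ + ε), ∫⁻ θ in Icc (-π) π,
        ENNReal.ofReal r * W (r * Real.cos θ, r * Real.sin θ) := by
      refine setLIntegral_mono (houter (Icc (-π) π)) (fun r _ => lintegral_mono_set hS_sub)
  _ = ∫⁻ r in Ioc r₀ (r₀ + ε), ∫⁻ θ in Ioo (-π) π,
        ENNReal.ofReal r * W (r * Real.cos θ, r * Real.sin θ) := by
      refine setLIntegral_congr_fun measurableSet_Ioc (id
        (fun r _ => ?_))
      exact (setLIntegral_congr Ioo_ae_eq_Icc).symm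
  _ ≤ ∫⁻ r in Ioi 0, ∫⁻ θ in Ioo (-π) π,
        ENNReal.ofReal r * W (r * Real.cos θ, r * Real.sin θ) := by
      refine lintegral_mono_set (fun r hr => ?_)
      exact mem_Ioi.2 (lt_trans hr₀ hr.1)
  _ = ∫⁻ p in polarCoord.target, ENNReal.ofReal p.1 * W (polarCoord.symm p) := by
      have h1 : ∀ p : ℝ × ℝ, ENNReal.ofReal p.1 * W (polarCoord.symm p)
          = ENNReal.ofReal p.1 * W (p.1 * Real.cos p.2, p.1 * Real.sin p.2) := by
        intro p; rw [polarCoord_symm_apply]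
      simp_rw [h1]
      rw [polarCoord_target, Measure.volume_eq_prod, ← Measure.prod_restrict,
        lintegral_prod _ hHm.aemeasurable]
  _ = ∫⁻ x : ℝ × ℝ, W x := lintegral_polar W
  _ = ∫⁻ y : ℝ × ℝ, W₂ y := by
      haveI : (volume : Measure (ℝ × ℝ)).IsAddRightInvariant :=
        (Measure.volume_eq_prod ℝ ℝ).symm ▸
          (inferInstance : ((volume : Measure ℝ).prod volume).IsAddRightInvariant)
      exact lintegral_add_right_eq_self W₂ (-r₁, 0)

theorem stmt_0 :
    ∃ ε₀ > (0:ℝ), ∃ C > (0:ℝ), ∀ ε : ℝ, 0 < ε → ε ≤ ε₀ →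
      ∀ r₀ : ℝ, 0 < r₀ → ∀ θ₀ : ℝ,
      ((∀ θ : ℝ, |θ - θ₀| ≤ ε / r₀ → |θ| ≤ π → 0 ≤ θ) ∨
       (∀ θ : ℝ, |θ - θ₀| ≤ ε / r₀ → |θ| ≤ π → θ ≤ 0)) →
      ∀ r₁ : ℝ, 0 < r₁ → ∀ t : ℝ, 0 < t →
      (∫ r in Set.Ioc r₀ (r₀ + ε),
        (∫ θ in {θ : ℝ | |θ - θ₀| ≤ ε / r₀ ∧ |θ| ≤ π},
          negHalfPos (t^2 - r₁^2 - r^2 + 2 * r₁ * r * Real.cos θ)) * r)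
        ≤ C * min t (t ^ (-(1/2) : ℝ)) := by
  refine ⟨1, one_pos, 1000, by norm_num, ?_⟩
  intro ε hε hε1 r₀ hr₀ θ₀ _hsign r₁ hr₁ t ht
  have hRHSpos : 0 ≤ 1000 * min t (t ^ (-(1/2) : ℝ)) :=
    mul_nonneg (by norm_num) (le_min ht.le (Real.rpow_nonneg ht.le _))
  set S : Set ℝ := {θ : ℝ | |θ - θ₀| ≤ ε / r₀ ∧ |θ| ≤ π} with hS
  set F : ℝ → ℝ → ℝ :=
    fun r θ => negHalfPos (t^2 - r₁^2 - r^2 + 2 * r₁ * r * Real.cos θ) with hF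
  have hcont : Continuous (fun p : ℝ × ℝ =>
      t^2 - r₁^2 - p.1^2 + 2 * r₁ * p.1 * Real.cos p.2) := by fun_prop
  have hFjm : Measurable (fun p : ℝ × ℝ => ENNReal.ofReal (F p.1 p.2)) :=
    ENNReal.measurable_ofReal.comp (measurable_negHalfPos.comp hcont.measurable)
  have hFm : ∀ r : ℝ, Measurable (fun θ => F r θ) := by
    intro r
    apply measurable_negHalfPos.comp
    fun_prop
  set G : ℝ → ℝ := fun r => (∫ θ in S, F r θ) * r with hG
  have inner_eq : ∀ r : ℝ, (∫ θ in S, F r θ)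
      = (∫⁻ θ in S, ENNReal.ofReal (F r θ)).toReal := fun r =>
    integral_eq_lintegral_of_nonneg_ae
      (Filter.Eventually.of_forall fun θ => negHalfPos_nonneg _)
      ((hFm r).aestronglyMeasurable)
  have hmeasJ : Measurable (fun r : ℝ =>
      (∫⁻ θ in S, ENNReal.ofReal (F r θ)) * ENNReal.ofReal r) := by
    apply Measurable.mul
    · exact Measurable.lintegral_prod_right (f := fun r θ => ENNReal.ofReal (F r θ)) hFjm
    · exact ENNReal.measurable_ofReal.comp measurable_id
  have hpoint : ∀ r ∈ Ioc r₀ (r₀ + ε), ENNReal.ofReal (G r)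
      ≤ (∫⁻ θ in S, ENNReal.ofReal (F r θ)) * ENNReal.ofReal r := by
    intro r hr
    rw [hG]
    simp only
    rw [inner_eq r, ENNReal.ofReal_mul ENNReal.toReal_nonneg]
    exact mul_le_mul' ENNReal.ofReal_toReal_le le_rfl
  have keychain : (∫⁻ r in Ioc r₀ (r₀ + ε), ENNReal.ofReal (G r))
      ≤ ENNReal.ofReal (1000 * min t (t ^ (-(1/2) : ℝ))) := by
    calc (∫⁻ r in Ioc r₀ (r₀ + ε), ENNReal.ofReal (G r))
        ≤ ∫⁻ r in Ioc r₀ (r₀ + ε),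
            (∫⁻ θ in S, ENNReal.ofReal (F r θ)) * ENNReal.ofReal r :=
          setLIntegral_mono hmeasJ hpoint
    _ ≤ _ := bound_J ε r₀ θ₀ r₁ t hε hr₀ ht
    _ ≤ _ := bound_P t ε (r₀ * Real.cos θ₀ - r₁) (r₀ * Real.sin θ₀) ht hε hε1
  by_cases hint : Integrable G (volume.restrict (Ioc r₀ (r₀ + ε)))
  · have hGnn : 0 ≤ᵐ[volume.restrict (Ioc r₀ (r₀ + ε))] G := by
      filter_upwards [ae_restrict_mem measurableSet_Ioc] with r hr
      exact mul_nonneg (integral_nonneg fun θ => negHalfPos_nonneg _)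
        (le_of_lt (lt_trans hr₀ hr.1))
    rw [show (∫ r in Set.Ioc r₀ (r₀ + ε),
        (∫ θ in {θ : ℝ | |θ - θ₀| ≤ ε / r₀ ∧ |θ| ≤ π},
          negHalfPos (t^2 - r₁^2 - r^2 + 2 * r₁ * r * Real.cos θ)) * r)
      = ∫ r in Ioc r₀ (r₀ + ε), G r from rfl]
    rw [integral_eq_lintegral_of_nonneg_ae hGnn hint.aestronglyMeasurable]
    exact ENNReal.toReal_le_of_le_ofReal hRHSpos keychain
  · rw [show (∫ r in Set.Ioc r₀ (r₀ + ε),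
        (∫ θ in {θ : ℝ | |θ - θ₀| ≤ ε / r₀ ∧ |θ| ≤ π},
          negHalfPos (t^2 - r₁^2 - r^2 + 2 * r₁ * r * Real.cos θ)) * r)
      = ∫ r in Ioc r₀ (r₀ + ε), G r from rfl]
    rw [integral_undef hint]
    exact hRHSpos
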